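/- For every positive integer p, there exists a finite collection S of corners in ℝ³ such that for every 2-coloring of S, there is a point x ∈ ℝ³ contained in exactly p corners of S, all of the same color. In particular, corners are not cover-decomposable. -/

import Mathlib

/-- The corner with coordinates `(a, b, c)` (where `a ≤ b`) is
`{(x,y,z) : a ≤ x ≤ b, y ≤ c, z ≥ c}`. -/
def InCorner (q s : ℝ × ℝ × ℝ) : Prop :=
  s.1 ≤ q.1 ∧ q.1 ≤ s.2.1 ∧ q.2.1 ≤ s.2.2 ∧ s.2.2 ≤ q.2.2

noncomputable instance : DecidablePred (fun s : ℝ × ℝ × ℝ => InCorner q s) := by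
  unfold InCorner; infer_instance

namespace NCD

/-! ### Geometry: dyadic x-intervals and ternary y-values indexed by bit strings -/

noncomputable def xI : List Bool → ℝ × ℝ
  | [] => (0, 1)
  | true :: v => (((xI v).1 + (xI v).2) / 2, (xI v).2)
  | false :: v => ((xI v).1, ((xI v).1 + (xI v).2) / 2)

noncomputable def yv : List Bool → ℝ
  | [] => 0
  | true :: v => yv v + (1/3 : ℝ) ^ (v.length + 1)
  | false :: v => yv v - (1/3 : ℝ) ^ (v.length + 1)

noncomputable def corner (v : List Bool) : ℝ × ℝ × ℝ := ((xI v).1, (xI v).2, yv v)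

lemma xI_width (v : List Bool) : (xI v).2 - (xI v).1 = (1/2 : ℝ) ^ v.length := by
  induction v with
  | nil => simp [xI]
  | cons b v ih =>
    rcases Bool.eq_false_or_eq_true b with hb | hb <;> subst hb <;>
      simp only [xI, List.length_cons] <;> rw [pow_succ] <;> linarith

lemma xI_lt (v : List Bool) : (xI v).1 < (xI v).2 := by
  have h1 := xI_width v
  have h2 : (0:ℝ) < (1/2 : ℝ) ^ v.length := by positivity
  linarith

lemma xI_child (b : Bool) (v : List Bool) :
    (xI v).1 ≤ (xI (b :: v)).1 ∧ (xI (b :: v)).2 ≤ (xI v).2 := by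
  have h := xI_lt v
  rcases Bool.eq_false_or_eq_true b with hb | hb <;> subst hb <;>
    exact ⟨by simp only [xI] <;> linarith, by simp only [xI] <;> linarith⟩

lemma xI_suffix {u v : List Bool} (h : u <:+ v) :
    (xI u).1 ≤ (xI v).1 ∧ (xI v).2 ≤ (xI u).2 := by
  induction v with
  | nil => rw [List.suffix_nil] at h; subst h; exact ⟨le_refl _, le_refl _⟩
  | cons b v ih =>
    rcases List.suffix_cons_iff.mp h with h | h
    · subst h; exact ⟨le_refl _, le_refl _⟩
    · obtain ⟨h1, h2⟩ := ih h
      obtain ⟨h3, h4⟩ := xI_child b v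
      exact ⟨le_trans h1 h3, le_trans h4 h2⟩

lemma xI_sep : ∀ (v u : List Bool), u.length ≤ v.length → ¬ (u <:+ v) →
    (xI u).2 ≤ (xI v).1 ∨ (xI v).2 ≤ (xI u).1 := by
  intro v
  induction v with
  | nil =>
    intro u hl hs
    have hu : u = [] := List.length_eq_zero_iff.mp (Nat.le_zero.mp hl)
    subst hu
    exact (hs List.nil_suffix).elim
  | cons b v ih =>
    intro u hl hs
    rcases u with _ | ⟨t, u'⟩
    · exact absurd List.nil_suffix hs
    by_cases hlen : u'.length ≤ v.length ∧ (t :: u').length ≤ v.length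
    · -- u strictly shorter than b :: v
      have hns : ¬ ((t :: u') <:+ v) := fun hsuf => hs (hsuf.trans (List.suffix_cons b v))
      have := ih (t :: u') hlen.2 hns
      obtain ⟨h3, h4⟩ := xI_child b v
      rcases this with h | h
      · exact Or.inl (le_trans h h3)
      · exact Or.inr (le_trans h4 h)
    · -- equal length case
      have hlen2 : u'.length = v.length := by
        simp only [List.length_cons] at hl
        simp only [List.length_cons] at hlen
        omega
      by_cases huv : u' = v
      · subst huv
        have htb : t ≠ b := by
          intro h; subst h; exact hs (List.suffix_refl _)
        have hx := xI_lt u'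
        rcases Bool.eq_false_or_eq_true b with hb | hb <;>
          rcases Bool.eq_false_or_eq_true t with ht | ht <;>
            subst hb <;> subst ht <;> simp_all [xI] <;> linarith
      · have hns : ¬ (u' <:+ v) := by
          intro hsuf
          exact huv (hsuf.eq_of_length hlen2)
        have := ih u' (le_of_eq hlen2) hns
        obtain ⟨h3, h4⟩ := xI_child b v
        obtain ⟨h5, h6⟩ := xI_child t u'
        rcases this with h | h
        · exact Or.inl (le_trans h6 (le_trans h h3))
        · exact Or.inr (le_trans h4 (le_trans h h5))

/-- The witness x-coordinate: one third into the interval of `w`. -/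
noncomputable def xq (w : List Bool) : ℝ := (2 * (xI w).1 + (xI w).2) / 3

lemma xq_mem_iff {u w : List Bool} (hlen : u.length ≤ w.length) :
    ((xI u).1 ≤ xq w ∧ xq w ≤ (xI u).2) ↔ u <:+ w := by
  have hw := xI_lt w
  have hq1 : (xI w).1 < xq w := by unfold xq; linarith
  have hq2 : xq w < (xI w).2 := by unfold xq; linarith
  constructor
  · intro ⟨h1, h2⟩
    by_contra hs
    rcases xI_sep w u hlen hs with h | h <;> linarith
  · intro hs
    obtain ⟨h1, h2⟩ := xI_suffix hs
    exact ⟨by linarith, by linarith⟩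

lemma yv_bound (v : List Bool) : |yv v| ≤ (1 - (1/3 : ℝ) ^ v.length) / 2 := by
  induction v with
  | nil => simp [yv]
  | cons b v ih =>
    have hpos : (0:ℝ) < (1/3 : ℝ) ^ (v.length + 1) := by positivity
    have h1 : |yv (b :: v)| ≤ |yv v| + (1/3 : ℝ) ^ (v.length + 1) := by
      rcases Bool.eq_false_or_eq_true b with hb | hb <;> subst hb <;> simp only [yv]
      all_goals
        first
        | (refine le_trans (abs_add_le _ _) ?_; rw [abs_of_pos hpos])
        | (rw [sub_eq_add_neg]; refine le_trans (abs_add_le _ _) ?_; rw [abs_neg, abs_of_pos hpos])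
    have h2 : ((1:ℝ)/3) ^ (v.length + 1) = (1/3 : ℝ) ^ v.length / 3 := by
      rw [pow_succ]; ring
    simp only [List.length_cons]
    rw [h2] at h1
    rw [h2]
    linarith

lemma yv_abs_lt (v : List Bool) : |yv v| < 1/2 := by
  have h1 : (0:ℝ) < (1/3 : ℝ) ^ v.length := by positivity
  have hb := yv_bound v
  linarith

lemma yv_gap : ∀ (v u : List Bool), u <:+ v → u ≠ v →
    ((1/3 : ℝ) ^ (u.length + 1) + (1/3 : ℝ) ^ v.length) / 2 ≤ |yv v - yv u| := by
  intro v
  induction v with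
  | nil => intro u h hne; rw [List.suffix_nil] at h; exact absurd h hne
  | cons b v ih =>
    intro u h hne
    rcases List.suffix_cons_iff.mp h with h | h
    · exact absurd h hne
    have hpos : (0:ℝ) < (1/3 : ℝ) ^ (v.length + 1) := by positivity
    have habs : |yv (b :: v) - yv v| = (1/3 : ℝ) ^ (v.length + 1) := by
      rcases Bool.eq_false_or_eq_true b with hb | hb <;> subst hb <;> simp only [yv]
      all_goals
        first
        | (rw [show yv v + (1/3 : ℝ) ^ (v.length + 1) - yv v = (1/3 : ℝ) ^ (v.length + 1) by ring,
            abs_of_pos hpos])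
        | (rw [show yv v - (1/3 : ℝ) ^ (v.length + 1) - yv v = -((1/3 : ℝ) ^ (v.length + 1)) by ring,
            abs_neg, abs_of_pos hpos])
    by_cases huv : u = v
    · subst huv
      rw [List.length_cons, habs]
      rw [show ((1/3 : ℝ) ^ (u.length + 1) + (1/3 : ℝ) ^ (u.length + 1)) / 2
          = (1/3 : ℝ) ^ (u.length + 1) by ring]
    · have hih := ih u h huv
      have h3 : |yv v - yv u| - |yv (b :: v) - yv v| ≤ |yv (b :: v) - yv u| := by
        have h4 := abs_sub_abs_le_abs_sub (yv v - yv u) (yv v - yv (b::v))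
        have h5 : |yv v - yv (b::v)| = |yv (b::v) - yv v| := abs_sub_comm _ _
        have h6 : |yv v - yv u - (yv v - yv (b::v))| = |yv (b::v) - yv u| := by
          rw [show yv v - yv u - (yv v - yv (b::v)) = yv (b::v) - yv u by ring]
        linarith
      rw [habs] at h3
      have hps : ((1:ℝ)/3) ^ (v.length + 1) = (1/3 : ℝ) ^ v.length / 3 := by
        rw [pow_succ]; ring
      rw [List.length_cons, hps]
      rw [hps] at h3
      linarith

lemma yv_inj {w u u' : List Bool} (hu : u <:+ w) (hu' : u' <:+ w) (hne : u ≠ u') :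
    yv u ≠ yv u' := by
  have hcomp := List.suffix_or_suffix_of_suffix hu hu'
  intro heq
  rcases hcomp with h | h
  · have hg := yv_gap u' u h hne
    have hp : (0:ℝ) < ((1/3 : ℝ) ^ (u.length + 1) + (1/3 : ℝ) ^ u'.length) / 2 := by positivity
    rw [heq, sub_self, abs_zero] at hg
    linarith
  · have hg := yv_gap u u' h (Ne.symm hne)
    have hp : (0:ℝ) < ((1/3 : ℝ) ^ (u'.length + 1) + (1/3 : ℝ) ^ u.length) / 2 := by positivity
    rw [← heq, sub_self, abs_zero] at hg
    linarith

/-! ### Node sets -/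

def allN : ℕ → Finset (List Bool)
  | 0 => {[]}
  | n + 1 => insert [] (((allN n).image (List.cons true)) ∪ ((allN n).image (List.cons false)))

lemma mem_allN : ∀ n (u : List Bool), u ∈ allN n ↔ u.length ≤ n := by
  intro n
  induction n with
  | zero =>
    intro u
    simp only [allN, Finset.mem_singleton, Nat.le_zero, List.length_eq_zero_iff]
  | succ n ih =>
    intro u
    rcases u with _ | ⟨b, u'⟩
    · simp [allN]
    · simp only [allN, Finset.mem_insert, Finset.mem_union, Finset.mem_image]
      constructor
      · rintro (h | ⟨a, ha, haa⟩ | ⟨a, ha, haa⟩)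
        · exact absurd h (by simp)
        all_goals
          (injection haa with hb' ha'
           subst ha'
           simpa using (ih a).mp ha)
      · intro hl
        simp only [List.length_cons] at hl
        rcases Bool.eq_false_or_eq_true b with hb | hb <;> subst hb <;>
          first
          | exact Or.inr (Or.inl ⟨u', (ih u').mpr (by omega), rfl⟩)
          | exact Or.inr (Or.inr ⟨u', (ih u').mpr (by omega), rfl⟩)

lemma corner_inj : Function.Injective corner := by
  intro u v h
  simp only [corner, Prod.mk.injEq] at h
  obtain ⟨h1, h2, _⟩ := h
  have hw : (1/2 : ℝ) ^ u.length = (1/2 : ℝ) ^ v.length := by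
    rw [← xI_width, ← xI_width, h1, h2]
  have hlen : u.length = v.length := by
    by_contra hne
    have hs : StrictAnti (fun n : ℕ => (1/2 : ℝ) ^ n) :=
      fun m n hmn => pow_lt_pow_right_of_lt_one₀ (by norm_num) (by norm_num) hmn
    exact hne (hs.injective hw)
  by_contra hne
  have hns : ¬ (u <:+ v) := fun hsuf => hne (hsuf.eq_of_length hlen)
  have hltu := xI_lt u
  have hltv := xI_lt v
  rcases xI_sep v u (le_of_eq hlen) hns with hsep | hsep <;> rw [h1, h2] at hltu <;> linarith

def suf (w : List Bool) : Finset (List Bool) :=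
  (Finset.range (w.length + 1)).image (fun i => w.drop i)

lemma mem_suf {w u : List Bool} : u ∈ suf w ↔ u <:+ w := by
  simp only [suf, Finset.mem_image, Finset.mem_range]
  constructor
  · rintro ⟨i, _, rfl⟩; exact List.drop_suffix i w
  · rintro ⟨t, rfl⟩
    refine ⟨t.length, ?_, ?_⟩
    · rw [List.length_append]; omega
    · exact List.drop_left

lemma card_suf (w : List Bool) : (suf w).card = w.length + 1 := by
  rw [suf, Finset.card_image_of_injOn, Finset.card_range]
  intro i hi j hj hij
  simp only [Finset.coe_range, Set.mem_Iio] at hi hj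
  dsimp only at hij
  have : (w.drop i).length = (w.drop j).length := by rw [hij]
  simp only [List.length_drop] at this
  omega

/-! ### The adaptive walk and its invariant -/

def walk (f : List Bool → Bool) : ℕ → List Bool
  | 0 => []
  | n + 1 => (f (walk f n) == f []) :: walk f n

lemma walk_length (f : List Bool → Bool) (n : ℕ) : (walk f n).length = n := by
  induction n with
  | zero => rfl
  | succ n ih => simp [walk, ih]

noncomputable def sg (f : List Bool → Bool) (v : List Bool) : ℝ :=
  if f v = f [] then 1 else -1

def Inv (f : List Bool → Bool) (v : List Bool) : Prop :=
  ∀ u, u <:+ v → u ≠ v →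
    (f u = f v → sg f v * (yv u - yv v) < 0) ∧
    (f u ≠ f v → sg f v * (yv u - yv v) > (1/3 : ℝ) ^ v.length / 2)

lemma bool_flip {a b c : Bool} (h : a ≠ b) : (a = c) ↔ ¬ (b = c) := by
  revert h; rcases a <;> rcases b <;> rcases c <;> decide

lemma inv_walk (f : List Bool → Bool) : ∀ n, Inv f (walk f n) := by
  intro n
  induction n with
  | zero =>
    intro u hu hne
    rw [walk, List.suffix_nil] at hu
    exact absurd hu hne
  | succ n ih =>
    set v := walk f n with hv
    set b := (f v == f []) with hb
    have hstep : yv (b :: v) = yv v + sg f v * (1/3 : ℝ) ^ (v.length + 1) := by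
      by_cases h0 : f v = f []
      · have hbt : b = true := by rw [hb]; simp [h0]
        rw [hbt]
        simp only [yv, sg, if_pos h0]
        ring
      · have hbf : b = false := by rw [hb]; simp [h0]
        rw [hbf]
        simp only [yv, sg, if_neg h0]
        ring
    have hsv : sg f v = 1 ∨ sg f v = -1 := by unfold sg; split <;> simp
    have hpow : ((1:ℝ)/3) ^ (v.length + 1) = (1/3 : ℝ) ^ v.length / 3 := by
      rw [pow_succ]; ring
    have hpos : (0:ℝ) < (1/3 : ℝ) ^ v.length := by positivity
    have hlen : (walk f (n+1)) = b :: v := rfl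
    rw [hlen]
    intro u hu hne
    have hu' : u <:+ v := by
      rcases List.suffix_cons_iff.mp hu with h | h
      · exact absurd h hne
      · exact h
    by_cases hc : f (b :: v) = f v
    · have hsg : sg f (b :: v) = sg f v := by unfold sg; rw [hc]
      by_cases huv : u = v
      · subst huv
        constructor
        · intro _
          rw [hsg, hstep]
          rcases hsv with hs | hs <;> rw [hs] <;> linarith [hpow, hpos]
        · intro hcc
          exact absurd hc.symm hcc
      · have hIH := ih u hu' huv
        constructor
        · intro hfu
          have h1 := hIH.1 (hfu.trans hc)
          rw [hsg, hstep]
          rcases hsv with hs | hs <;> rw [hs] <;> rw [hs] at h1 <;> linarith [hpow, hpos]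
        · intro hfu
          have hfu' : f u ≠ f v := by rw [← hc]; exact hfu
          have h1 := hIH.2 hfu'
          rw [hsg, hstep]
          simp only [List.length_cons]
          rcases hsv with hs | hs <;> rw [hs] <;> rw [hs] at h1 <;> rw [hpow] <;>
            linarith [hpos]
    · have hsg : sg f (b :: v) = - sg f v := by
        unfold sg
        by_cases h0 : f v = f []
        · have h1 : ¬ (f (b::v) = f []) := fun hh => hc (hh.trans h0.symm)
          simp [h0, h1]
        · have h1 : f (b :: v) = f [] := by
            rcases Bool.eq_false_or_eq_true (f (b::v)) with ha | ha <;>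
              rcases Bool.eq_false_or_eq_true (f v) with hb' | hb' <;>
                rcases Bool.eq_false_or_eq_true (f []) with hc' | hc' <;>
                  simp_all
          simp [h0, h1]
      by_cases huv : u = v
      · subst huv
        constructor
        · intro hcc
          exact absurd hcc.symm hc
        · intro _
          rw [hsg, hstep]
          simp only [List.length_cons]
          rcases hsv with hs | hs <;> rw [hs] <;> rw [hpow] <;> linarith [hpos]
      · have hIH := ih u hu' huv
        constructor
        · intro hfu
          have hfu' : f u ≠ f v := by rw [← hfu] at hc; exact hc
          have h1 := hIH.2 hfu'
          rw [hsg, hstep]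
          rcases hsv with hs | hs <;> rw [hs] <;> rw [hs] at h1 <;> rw [hpow] <;>
            linarith [hpos]
        · intro hfu
          have hfu' : f u = f v := by
            rcases Bool.eq_false_or_eq_true (f u) with ha | ha <;>
              rcases Bool.eq_false_or_eq_true (f v) with hb' | hb' <;>
                rcases Bool.eq_false_or_eq_true (f (b::v)) with hc' | hc' <;>
                  simp_all
          have h1 := hIH.1 hfu'
          rw [hsg, hstep]
          simp only [List.length_cons]
          rcases hsv with hs | hs <;> rw [hs] <;> rw [hs] at h1 <;> rw [hpow] <;>
            linarith [hpos]

/-- Block structure: all root-colored ancestors lie strictly below all other ancestors. -/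
lemma block {f : List Bool → Bool} {w u u' : List Bool} (hI : Inv f w)
    (hu : u <:+ w) (hu' : u' <:+ w) (hcu : f u = f []) (hcu' : f u' ≠ f []) :
    yv u < yv u' := by
  have hpow : (0:ℝ) < (1/3 : ℝ) ^ w.length / 2 := by positivity
  have hne : u ≠ u' := fun h => hcu' (h ▸ hcu)
  by_cases hwc : f w = f []
  · -- w is root colored, sg w = 1
    have hsg : sg f w = 1 := by unfold sg; simp [hwc]
    have hu'w : u' ≠ w := fun h => hcu' (h ▸ hwc)
    have h2 := (hI u' hu' hu'w).2 (by rw [hwc]; exact hcu')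
    rw [hsg, one_mul] at h2
    by_cases huw : u = w
    · subst huw; linarith
    · have h1 := (hI u hu huw).1 (by rw [hwc]; exact hcu)
      rw [hsg, one_mul] at h1
      linarith
  · have hsg : sg f w = -1 := by unfold sg; simp [hwc]
    have huw : u ≠ w := fun h => hwc (h ▸ hcu)
    have h1 := (hI u hu huw).2 (fun h => hwc (hcu ▸ h ▸ rfl))
    rw [hsg] at h1
    by_cases hu'w : u' = w
    · subst hu'w; nlinarith
    · have hcu'w : f u' = f w := by
        rcases Bool.eq_false_or_eq_true (f u') with h | h <;>
          rcases Bool.eq_false_or_eq_true (f w) with h' | h' <;>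
            rcases Bool.eq_false_or_eq_true (f []) with h'' | h'' <;> simp_all
      have h2 := (hI u' hu' hu'w).1 hcu'w
      rw [hsg] at h2
      nlinarith

/-! ### order statistics on finite sets of reals -/

lemma exists_nth_le : ∀ (p : ℕ), 0 < p → ∀ (s : Finset ℝ), p ≤ s.card →
    ∃ θ ∈ s, (s.filter (fun x => x ≤ θ)).card = p := by
  intro p
  induction p with
  | zero => omega
  | succ k ih =>
    intro _ s hs
    by_cases hk : k = 0
    · subst hk
      have hne : s.Nonempty := Finset.card_pos.mp (by omega)
      refine ⟨s.min' hne, s.min'_mem hne, ?_⟩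
      have : s.filter (fun x => x ≤ s.min' hne) = {s.min' hne} := by
        ext x
        simp only [Finset.mem_filter, Finset.mem_singleton]
        constructor
        · rintro ⟨hx, hle⟩; exact le_antisymm hle (s.min'_le x hx)
        · rintro rfl; exact ⟨s.min'_mem hne, le_refl _⟩
      rw [this]; simp
    · have hne : s.Nonempty := Finset.card_pos.mp (by omega)
      set m := s.min' hne with hm
      have hmm : m ∈ s := s.min'_mem hne
      have hcard : k ≤ (s.erase m).card := by
        rw [Finset.card_erase_of_mem hmm]; omega
      obtain ⟨θ, hθ, hcount⟩ := ih (by omega) (s.erase m) hcard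
      have hθs : θ ∈ s := Finset.mem_of_mem_erase hθ
      refine ⟨θ, hθs, ?_⟩
      have hmθ : m ≤ θ := s.min'_le θ hθs
      have : s.filter (fun x => x ≤ θ) = insert m ((s.erase m).filter (fun x => x ≤ θ)) := by
        ext x
        simp only [Finset.mem_filter, Finset.mem_insert, Finset.mem_erase]
        constructor
        · rintro ⟨hx, hle⟩
          by_cases hxm : x = m
          · exact Or.inl hxm
          · exact Or.inr ⟨⟨hxm, hx⟩, hle⟩
        · rintro (rfl | ⟨⟨_, hx⟩, hle⟩)
          · exact ⟨hmm, hmθ⟩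
          · exact ⟨hx, hle⟩
      rw [this, Finset.card_insert_of_notMem (by simp), hcount]

lemma exists_nth_ge : ∀ (p : ℕ), 0 < p → ∀ (s : Finset ℝ), p ≤ s.card →
    ∃ θ ∈ s, (s.filter (fun x => θ ≤ x)).card = p := by
  intro p
  induction p with
  | zero => omega
  | succ k ih =>
    intro _ s hs
    by_cases hk : k = 0
    · subst hk
      have hne : s.Nonempty := Finset.card_pos.mp (by omega)
      refine ⟨s.max' hne, s.max'_mem hne, ?_⟩
      have : s.filter (fun x => s.max' hne ≤ x) = {s.max' hne} := by
        ext x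
        simp only [Finset.mem_filter, Finset.mem_singleton]
        constructor
        · rintro ⟨hx, hle⟩; exact le_antisymm (s.le_max' x hx) hle
        · rintro rfl; exact ⟨s.max'_mem hne, le_refl _⟩
      rw [this]; simp
    · have hne : s.Nonempty := Finset.card_pos.mp (by omega)
      set m := s.max' hne with hm
      have hmm : m ∈ s := s.max'_mem hne
      have hcard : k ≤ (s.erase m).card := by
        rw [Finset.card_erase_of_mem hmm]; omega
      obtain ⟨θ, hθ, hcount⟩ := ih (by omega) (s.erase m) hcard
      have hθs : θ ∈ s := Finset.mem_of_mem_erase hθ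
      refine ⟨θ, hθs, ?_⟩
      have hmθ : θ ≤ m := s.le_max' θ hθs
      have : s.filter (fun x => θ ≤ x) = insert m ((s.erase m).filter (fun x => θ ≤ x)) := by
        ext x
        simp only [Finset.mem_filter, Finset.mem_insert, Finset.mem_erase]
        constructor
        · rintro ⟨hx, hle⟩
          by_cases hxm : x = m
          · exact Or.inl hxm
          · exact Or.inr ⟨⟨hxm, hx⟩, hle⟩
        · rintro (rfl | ⟨⟨_, hx⟩, hle⟩)
          · exact ⟨hmm, hmθ⟩
          · exact ⟨hx, hle⟩
      rw [this, Finset.card_insert_of_notMem (by simp), hcount]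


lemma bool_ne {a b : Bool} (h : a ≠ b) : a = !b := by
  rcases a <;> rcases b <;> simp_all

/-- Assembly step: once we have a window `[lo, hi]` catching exactly the right
suffixes of `w`, produce the witness point. -/
lemma assemble (p T : ℕ) (χ : ℝ × ℝ × ℝ → Bool) (w : List Bool) (hwlen : w.length = T)
    (c : Bool) (lo hi : ℝ)
    (hcard : ((suf w).filter (fun u => lo ≤ yv u ∧ yv u ≤ hi)).card = p)
    (hcol : ∀ u ∈ (suf w).filter (fun u => lo ≤ yv u ∧ yv u ≤ hi), χ (corner u) = c) :
    ∃ q : ℝ × ℝ × ℝ, ∃ c' : Bool,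
      (((allN T).image corner).filter (fun s => InCorner q s)).card = p ∧
      ∀ s ∈ ((allN T).image corner).filter (fun s => InCorner q s), χ s = c' := by
  classical
  have key : ((allN T).image corner).filter (fun s => InCorner (xq w, lo, hi) s)
        = ((suf w).filter (fun u => lo ≤ yv u ∧ yv u ≤ hi)).image corner := by
      ext s
      simp only [Finset.mem_filter, Finset.mem_image]
      constructor
      · rintro ⟨⟨u, hu, rfl⟩, hq⟩
        refine ⟨u, ?_, rfl⟩
        obtain ⟨h1, h2, h3, h4⟩ := hq
        have hlen : u.length ≤ w.length := by
          rw [hwlen]; exact (mem_allN T u).mp hu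
        have hsuf : u <:+ w := (xq_mem_iff hlen).mp ⟨h1, h2⟩
        exact ⟨mem_suf.mpr hsuf, h3, h4⟩
      · rintro ⟨u, hu, rfl⟩
        obtain ⟨husuf, h3, h4⟩ := hu
        have hsuf := mem_suf.mp husuf
        have hlen : u.length ≤ w.length := hsuf.length_le
        obtain ⟨h1, h2⟩ := (xq_mem_iff hlen).mpr hsuf
        exact ⟨⟨u, (mem_allN T u).mpr (by rw [← hwlen]; exact hlen), rfl⟩, h1, h2, h3, h4⟩
  refine ⟨(xq w, lo, hi), c, ?_, ?_⟩
  · rw [key, Finset.card_image_of_injective _ corner_inj]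
    exact hcard
  · intro s hs
    rw [key, Finset.mem_image] at hs
    obtain ⟨u, hu, rfl⟩ := hs
    exact hcol u hu

end NCD

/-- Corners are not cover-decomposable: for every `p ≥ 1` there is a finite
collection of corners such that for every 2-coloring, some point of `ℝ³` is
contained in exactly `p` of the corners, all of the same color. -/
theorem corners_not_cover_decomposable (p : ℕ) (hp : 0 < p) :
    ∃ S : Finset (ℝ × ℝ × ℝ),
      (∀ s ∈ S, s.1 ≤ s.2.1) ∧
      ∀ χ : (ℝ × ℝ × ℝ) → Bool, ∃ q : ℝ × ℝ × ℝ, ∃ c : Bool,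
        (S.filter (fun s => InCorner q s)).card = p ∧
        ∀ s ∈ S.filter (fun s => InCorner q s), χ s = c := by
  classical
  set T := 2 * p - 2 with hT
  refine ⟨(NCD.allN T).image NCD.corner, ?_, ?_⟩
  · intro s hs
    rw [Finset.mem_image] at hs
    obtain ⟨u, _, rfl⟩ := hs
    exact (NCD.xI_lt u).le
  · intro χ
    set f : List Bool → Bool := fun v => χ (NCD.corner v) with hf
    set w : List Bool := NCD.walk f T with hw
    have hwlen : w.length = T := NCD.walk_length f T
    have hInv : NCD.Inv f w := NCD.inv_walk f T
    have hcardSuf : (NCD.suf w).card = 2 * p - 1 := by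
      rw [NCD.card_suf, hwlen]; omega
    set A := (NCD.suf w).filter (fun u => f u = f []) with hA
    set B := (NCD.suf w).filter (fun u => ¬ (f u = f [])) with hB
    have hABcard : A.card + B.card = 2 * p - 1 := by
      rw [hA, hB, Finset.card_filter_add_card_filter_not]
      exact hcardSuf
    have hblock : ∀ u ∈ A, ∀ u' ∈ B, NCD.yv u < NCD.yv u' := by
      intro u hu u' hu'
      rw [hA, Finset.mem_filter] at hu
      rw [hB, Finset.mem_filter] at hu'
      exact NCD.block hInv (NCD.mem_suf.mp hu.1) (NCD.mem_suf.mp hu'.1) hu.2 hu'.2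
    have hsufA : ∀ u ∈ A, u <:+ w := by
      intro u hu; rw [hA, Finset.mem_filter] at hu; exact NCD.mem_suf.mp hu.1
    have hsufB : ∀ u ∈ B, u <:+ w := by
      intro u hu; rw [hB, Finset.mem_filter] at hu; exact NCD.mem_suf.mp hu.1
    by_cases hcase : p ≤ A.card
    · -- the root-color class is large
      have hinjA : Set.InjOn NCD.yv ↑A := by
        intro u hu u' hu' heq
        by_contra hne
        exact NCD.yv_inj (hsufA u hu) (hsufA u' hu') hne heq
      have hcardim : p ≤ (A.image NCD.yv).card := by
        rw [Finset.card_image_of_injOn hinjA]; exact hcase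
      obtain ⟨θ, hθmem, hθcount⟩ := NCD.exists_nth_le p hp (A.image NCD.yv) hcardim
      obtain ⟨u0, hu0A, hu0⟩ := Finset.mem_image.mp hθmem
      have hit : (NCD.suf w).filter (fun u => (-1:ℝ) ≤ NCD.yv u ∧ NCD.yv u ≤ θ)
          = A.filter (fun u => NCD.yv u ≤ θ) := by
        ext u
        rw [hA]
        simp only [Finset.mem_filter]
        constructor
        · rintro ⟨husuf, _, hle⟩
          refine ⟨⟨husuf, ?_⟩, hle⟩
          by_contra hfc
          have huB : u ∈ B := by rw [hB, Finset.mem_filter]; exact ⟨husuf, hfc⟩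
          have := hblock u0 hu0A u huB
          rw [hu0] at this
          linarith
        · rintro ⟨⟨husuf, _⟩, hle⟩
          have habs := NCD.yv_abs_lt u
          have := (abs_lt.mp habs).1
          exact ⟨husuf, by linarith, hle⟩
      have hcount : ((NCD.suf w).filter (fun u => (-1:ℝ) ≤ NCD.yv u ∧ NCD.yv u ≤ θ)).card = p := by
        rw [hit]
        have him : ((A.filter (fun u => NCD.yv u ≤ θ)).image NCD.yv)
            = (A.image NCD.yv).filter (fun x => x ≤ θ) :=
          by rw [Finset.filter_image]
        have hinj' : Set.InjOn NCD.yv ↑(A.filter (fun u => NCD.yv u ≤ θ)) :=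
          hinjA.mono (fun x hx => by simp only [Finset.coe_filter, Set.mem_setOf_eq] at hx; exact hx.1)
        rw [← Finset.card_image_of_injOn hinj', him, hθcount]
      refine NCD.assemble p T χ w hwlen (f []) (-1) θ hcount ?_
      intro u hu
      rw [hit] at hu
      rw [hA] at hu
      simp only [Finset.mem_filter] at hu
      exact hu.1.2
    · -- the other class is large
      have hcaseB : p ≤ B.card := by omega
      have hinjB : Set.InjOn NCD.yv ↑B := by
        intro u hu u' hu' heq
        by_contra hne
        exact NCD.yv_inj (hsufB u hu) (hsufB u' hu') hne heq
      have hcardim : p ≤ (B.image NCD.yv).card := by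
        rw [Finset.card_image_of_injOn hinjB]; exact hcaseB
      obtain ⟨θ, hθmem, hθcount⟩ := NCD.exists_nth_ge p hp (B.image NCD.yv) hcardim
      obtain ⟨u0, hu0B, hu0⟩ := Finset.mem_image.mp hθmem
      have hit : (NCD.suf w).filter (fun u => θ ≤ NCD.yv u ∧ NCD.yv u ≤ (1:ℝ))
          = B.filter (fun u => θ ≤ NCD.yv u) := by
        ext u
        rw [hB]
        simp only [Finset.mem_filter]
        constructor
        · rintro ⟨husuf, hle, _⟩
          refine ⟨⟨husuf, ?_⟩, hle⟩
          intro hfc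
          have huA : u ∈ A := by rw [hA, Finset.mem_filter]; exact ⟨husuf, hfc⟩
          have := hblock u huA u0 hu0B
          rw [hu0] at this
          linarith
        · rintro ⟨⟨husuf, _⟩, hle⟩
          have habs := NCD.yv_abs_lt u
          have := (abs_lt.mp habs).2
          exact ⟨husuf, hle, by linarith⟩
      have hcount : ((NCD.suf w).filter (fun u => θ ≤ NCD.yv u ∧ NCD.yv u ≤ (1:ℝ))).card = p := by
        rw [hit]
        have him : ((B.filter (fun u => θ ≤ NCD.yv u)).image NCD.yv)
            = (B.image NCD.yv).filter (fun x => θ ≤ x) :=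
          by rw [Finset.filter_image]
        have hinj' : Set.InjOn NCD.yv ↑(B.filter (fun u => θ ≤ NCD.yv u)) :=
          hinjB.mono (fun x hx => by simp only [Finset.coe_filter, Set.mem_setOf_eq] at hx; exact hx.1)
        rw [← Finset.card_image_of_injOn hinj', him, hθcount]
      refine NCD.assemble p T χ w hwlen (!(f [])) θ 1 hcount ?_
      intro u hu
      rw [hit] at hu
      rw [hB] at hu
      simp only [Finset.mem_filter] at hu
      exact NCD.bool_ne hu.1.2
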